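/- arXiv:1809.05738 — 6 statements merged into one kernel-verified Lean document; each statement's English description precedes it below -/
import Mathlib

section
/- Let Q = (V, A, h, t) be a quiver, k a field, η = (η_v)_{v∈V} ∈ k^V, and d ∈ ℕ^V. If there exists a d-dimensional k-representation of the doubled quiver Q̄ satisfying the relations R_η, then Σ_{v∈V} η_v · d_v = 0 in k (where each d_v is interpreted via the natural map ℕ → k). -/
/-- If there exists a `d`-dimensional `k`-representation
`((W v), (φ a), (ψ a))` of the doubled quiver `Q̄` satisfying the moment map relations
`R_η` (i.e. for every vertex `v`,
`Σ_{a : hd a = v} φ a ∘ ψ a − Σ_{a : tl a = v} ψ a ∘ φ a = η v • id`), then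
`Σ_v η v · d v = 0` in `k`. -/
theorem stmt_5 (k : Type) [Field k] (V A : Type) [Fintype V] [Fintype A] [DecidableEq V]
    (hd tl : A → V) (η : V → k) (d : V → ℕ)
    (W : V → Type)
    [∀ v, AddCommGroup (W v)] [∀ v, Module k (W v)] [∀ v, FiniteDimensional k (W v)]
    (hdim : ∀ v, Module.finrank k (W v) = d v)
    (φ : ∀ a, W (tl a) →ₗ[k] W (hd a)) (ψ : ∀ a, W (hd a) →ₗ[k] W (tl a))
    -- the relations R_η : Σ_{a : hd a = v} φ a ∘ ψ a − Σ_{a : tl a = v} ψ a ∘ φ a = η v • id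
    (hrel : ∀ v,
      (∑ a, Pi.single (M := fun v => W v →ₗ[k] W v) (hd a) ((φ a).comp (ψ a))) v
        - (∑ a, Pi.single (M := fun v => W v →ₗ[k] W v) (tl a) ((ψ a).comp (φ a))) v
      = η v • (LinearMap.id : W v →ₗ[k] W v)) :
    ∑ v, η v * (d v : k) = 0 := by
  have key : ∀ v, η v * (d v : k)
      = ∑ a, LinearMap.trace k (W v) (Pi.single (M := fun v => W v →ₗ[k] W v) (hd a) ((φ a).comp (ψ a)) v)
        - ∑ a, LinearMap.trace k (W v) (Pi.single (M := fun v => W v →ₗ[k] W v) (tl a) ((ψ a).comp (φ a)) v) := by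
    intro v
    have := congrArg (LinearMap.trace k (W v)) (hrel v)
    simp only [map_sub, map_sum, map_smul, LinearMap.trace_id, hdim, smul_eq_mul] at this
    simp only [Finset.sum_apply, map_sum] at this
    exact this.symm
  calc ∑ v, η v * (d v : k)
      = ∑ v, (∑ a, LinearMap.trace k (W v) (Pi.single (M := fun v => W v →ₗ[k] W v) (hd a) ((φ a).comp (ψ a)) v)
        - ∑ a, LinearMap.trace k (W v) (Pi.single (M := fun v => W v →ₗ[k] W v) (tl a) ((ψ a).comp (φ a)) v)) :=
        Finset.sum_congr rfl fun v _ => key v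
    _ = ∑ a, (∑ v, LinearMap.trace k (W v) (Pi.single (M := fun v => W v →ₗ[k] W v) (hd a) ((φ a).comp (ψ a)) v))
        - ∑ a, (∑ v, LinearMap.trace k (W v) (Pi.single (M := fun v => W v →ₗ[k] W v) (tl a) ((ψ a).comp (φ a)) v)) := by
        rw [Finset.sum_sub_distrib]; congr 1 <;> exact Finset.sum_comm
    _ = ∑ a, LinearMap.trace k _ ((φ a).comp (ψ a)) - ∑ a, LinearMap.trace k _ ((ψ a).comp (φ a)) := by
        congr 1 <;> refine Finset.sum_congr rfl fun a _ => ?_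
        · rw [Finset.sum_eq_single (hd a)]
          · rw [Pi.single_eq_same]
          · intro v _ hv; rw [Pi.single_eq_of_ne hv]; simp
          · simp
        · rw [Finset.sum_eq_single (tl a)]
          · rw [Pi.single_eq_same]
          · intro v _ hv; rw [Pi.single_eq_of_ne hv]; simp
          · simp
    _ = 0 := by
        rw [sub_eq_zero]
        exact Finset.sum_congr rfl fun a _ => (LinearMap.trace_comp_comm' (φ a) (ψ a)).symm
end

section
/- Let Q = (V, A, h, t) be a quiver, d ∈ ℕ^V, and θ ∈ ℤ^V generic with respect to d. Let k be a field of characteristic zero, and regard θ as an element of k^V via ℤ → k. Then every d-dimensional k-representation of the doubled quiver Q̄ satisfying the relations R_θ has no subrepresentations other than 0 and itself; in particular, every such representation is θ-stable. -/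
/-- Let `θ` be generic with respect to `d` and `k` a field of
characteristic zero. Then every `d`-dimensional `k`-representation of the doubled quiver
`Q̄` satisfying the relations `R_θ` has no subrepresentations other than `0` and itself;
in particular every such representation is θ-stable. -/
theorem stmt_6 (k : Type) [Field k] [CharZero k]
    (V A : Type) [Fintype V] [Fintype A] [DecidableEq V]
    (hd tl : A → V) (d : V → ℕ) (θ : V → ℤ)
    -- θ is generic with respect to d:
    (hθd : ∑ v, θ v * (d v : ℤ) = 0)
    (hgen : ∀ d' : V → ℕ, d' ≠ 0 → d' ≠ d → (∀ v, d' v ≤ d v) →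
      ∑ v, θ v * (d' v : ℤ) ≠ 0)
    -- a d-dimensional representation of the doubled quiver:
    (W : V → Type)
    [∀ v, AddCommGroup (W v)] [∀ v, Module k (W v)] [∀ v, FiniteDimensional k (W v)]
    (hdim : ∀ v, Module.finrank k (W v) = d v)
    (φ : ∀ a, W (tl a) →ₗ[k] W (hd a)) (ψ : ∀ a, W (hd a) →ₗ[k] W (tl a))
    -- satisfying the relations R_θ (θ regarded in k):
    (hrel : ∀ v,
      (∑ a, Pi.single (M := fun v => W v →ₗ[k] W v) (hd a) ((φ a).comp (ψ a))) v
        - (∑ a, Pi.single (M := fun v => W v →ₗ[k] W v) (tl a) ((ψ a).comp (φ a))) v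
      = ((θ v : k)) • (LinearMap.id : W v →ₗ[k] W v)) :
    -- it has no subrepresentations other than 0 and itself:
    (∀ U : ∀ v, Submodule k (W v),
      (∀ a, ∀ x ∈ U (tl a), φ a x ∈ U (hd a)) →
      (∀ a, ∀ x ∈ U (hd a), ψ a x ∈ U (tl a)) →
      (∀ v, U v = ⊥) ∨ (∀ v, U v = ⊤)) ∧
    -- in particular it is θ-stable:
    (∀ U : ∀ v, Submodule k (W v),
      (∀ a, ∀ x ∈ U (tl a), φ a x ∈ U (hd a)) →
      (∀ a, ∀ x ∈ U (hd a), ψ a x ∈ U (tl a)) →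
      (¬ ∀ v, U v = ⊥) → (¬ ∀ v, U v = ⊤) →
      0 < ∑ v, θ v * (Module.finrank k (U v) : ℤ)) := by
  have key : ∀ U : ∀ v, Submodule k (W v),
      (∀ a, ∀ x ∈ U (tl a), φ a x ∈ U (hd a)) →
      (∀ a, ∀ x ∈ U (hd a), ψ a x ∈ U (tl a)) →
      (∀ v, U v = ⊥) ∨ (∀ v, U v = ⊤) := by
    intro U hU1 hU2
    -- choose complements and projections onto U v
    have hc : ∀ v, ∃ q, IsCompl (U v) q := fun v => Submodule.exists_isCompl _
    choose q hq using hc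
    set π : ∀ v, W v →ₗ[k] W v :=
      fun v => (U v).subtype ∘ₗ (U v).projectionOnto (q v) (hq v) with hπdef
    have hπmem : ∀ v x, π v x ∈ U v := fun v x =>
      ((U v).projectionOnto (q v) (hq v) x).2
    have hπid : ∀ v, ∀ x ∈ U v, π v x = x := by
      intro v x hx
      show ((U v).projectionOnto (q v) (hq v) x : W v) = x
      have hx' : x = ((⟨x, hx⟩ : U v) : W v) := rfl
      rw [hx', Submodule.linearProjOfIsCompl_apply_left (hq v)]
    -- trace of π v is the rank of U v
    have hπtr : ∀ v, LinearMap.trace k (W v) (π v) = (Module.finrank k (U v) : k) := by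
      intro v
      show LinearMap.trace k (W v)
        ((U v).subtype ∘ₗ (U v).projectionOnto (q v) (hq v)) = _
      rw [LinearMap.trace_comp_comm', Submodule.linearProjOfIsCompl_comp_subtype,
        LinearMap.trace_id]
    -- collapsing the sum of traces of a `Pi.single` family
    have hsingle : ∀ (w : V) (X : W w →ₗ[k] W w),
        ∑ v, LinearMap.trace k (W v)
          ((Pi.single (M := fun v => W v →ₗ[k] W v) w X) v ∘ₗ π v)
        = LinearMap.trace k (W w) (X ∘ₗ π w) := by
      intro w X
      refine Finset.sum_eq_single_of_mem w (Finset.mem_univ w) ?_ |>.trans ?_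
      · intro v _ hv
        rw [Pi.single_eq_of_ne hv, LinearMap.zero_comp, map_zero]
      · rw [Pi.single_eq_same]
    -- the key trace identity: each arrow contributes zero
    have harrow : ∀ a : A,
        LinearMap.trace k (W (hd a)) (((φ a).comp (ψ a)) ∘ₗ π (hd a))
        = LinearMap.trace k (W (tl a)) (((ψ a).comp (φ a)) ∘ₗ π (tl a)) := by
      intro a
      have h1 : π (tl a) ∘ₗ (ψ a ∘ₗ π (hd a)) = ψ a ∘ₗ π (hd a) := by
        ext x
        exact hπid _ _ (hU2 a _ (hπmem _ x))
      have h2 : π (hd a) ∘ₗ (φ a ∘ₗ π (tl a)) = φ a ∘ₗ π (tl a) := by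
        ext x
        exact hπid _ _ (hU1 a _ (hπmem _ x))
      calc LinearMap.trace k (W (hd a)) (((φ a).comp (ψ a)) ∘ₗ π (hd a))
          = LinearMap.trace k (W (hd a)) ((φ a ∘ₗ π (tl a)) ∘ₗ (ψ a ∘ₗ π (hd a))) := by
            conv_rhs => rw [LinearMap.comp_assoc, h1]
            rw [LinearMap.comp_assoc]
        _ = LinearMap.trace k (W (tl a)) ((ψ a ∘ₗ π (hd a)) ∘ₗ (φ a ∘ₗ π (tl a))) :=
            (LinearMap.trace_comp_comm' _ _).symm
        _ = LinearMap.trace k (W (tl a)) (((ψ a).comp (φ a)) ∘ₗ π (tl a)) := by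
            conv_lhs => rw [LinearMap.comp_assoc, h2]
            rw [LinearMap.comp_assoc]
    -- sum over vertices of traces of the relation composed with π
    have hmain : ∑ v, (θ v : k) * (Module.finrank k (U v) : k) = 0 := by
      have := calc
        ∑ v, (θ v : k) * (Module.finrank k (U v) : k)
            = ∑ v, LinearMap.trace k (W v)
              (((∑ a, Pi.single (M := fun v => W v →ₗ[k] W v) (hd a) ((φ a).comp (ψ a))) v
                - (∑ a, Pi.single (M := fun v => W v →ₗ[k] W v) (tl a) ((ψ a).comp (φ a))) v)
                ∘ₗ π v) := by
              refine Finset.sum_congr rfl fun v _ => ?_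
              rw [hrel v, LinearMap.smul_comp, LinearMap.id_comp, map_smul, smul_eq_mul, hπtr]
          _ = (∑ a, LinearMap.trace k (W (hd a)) (((φ a).comp (ψ a)) ∘ₗ π (hd a)))
              - (∑ a, LinearMap.trace k (W (tl a)) (((ψ a).comp (φ a)) ∘ₗ π (tl a))) := by
              have expand : ∀ v, LinearMap.trace k (W v)
                  (((∑ a, Pi.single (M := fun v => W v →ₗ[k] W v) (hd a) ((φ a).comp (ψ a))) v
                  - (∑ a, Pi.single (M := fun v => W v →ₗ[k] W v) (tl a) ((ψ a).comp (φ a))) v)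
                  ∘ₗ π v)
                  = (∑ a, LinearMap.trace k (W v)
                      ((Pi.single (M := fun v => W v →ₗ[k] W v) (hd a) ((φ a).comp (ψ a))) v
                        ∘ₗ π v))
                    - (∑ a, LinearMap.trace k (W v)
                      ((Pi.single (M := fun v => W v →ₗ[k] W v) (tl a) ((ψ a).comp (φ a))) v
                        ∘ₗ π v)) := by
                intro v
                have sumcomp : ∀ (f : A → (W v →ₗ[k] W v)),
                    (∑ a, f a) ∘ₗ π v = ∑ a, f a ∘ₗ π v := fun f =>
                  LinearMap.ext fun x => by simp
                rw [LinearMap.sub_comp, map_sub, Finset.sum_apply, Finset.sum_apply,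
                  sumcomp, sumcomp, map_sum, map_sum]
              rw [Finset.sum_congr rfl fun v _ => expand v, Finset.sum_sub_distrib]
              congr 1
              · rw [Finset.sum_comm]
                exact Finset.sum_congr rfl fun a _ => hsingle (hd a) _
              · rw [Finset.sum_comm]
                exact Finset.sum_congr rfl fun a _ => hsingle (tl a) _
          _ = 0 := by
              rw [Finset.sum_congr rfl fun a _ => harrow a, sub_self]
      exact this
    -- deduce the integer identity and apply genericity
    have hint : ∑ v, θ v * (Module.finrank k (U v) : ℤ) = 0 := by
      have : ((∑ v, θ v * (Module.finrank k (U v) : ℤ) : ℤ) : k) = 0 := by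
        push_cast
        exact hmain
      exact_mod_cast this
    by_contra hcon
    push_neg at hcon
    obtain ⟨⟨v₀, hv₀⟩, ⟨v₁, hv₁⟩⟩ := hcon
    have hne0 : (fun v => Module.finrank k (U v)) ≠ 0 := by
      intro h
      apply hv₀
      have : Module.finrank k (U v₀) = 0 := congrFun h v₀
      exact Submodule.finrank_eq_zero.mp this
    have hned : (fun v => Module.finrank k (U v)) ≠ d := by
      intro h
      apply hv₁
      have : Module.finrank k (U v₁) = Module.finrank k (W v₁) := by
        rw [congrFun h v₁, hdim]
      exact Submodule.eq_top_of_finrank_eq this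
    have hle : ∀ v, Module.finrank k (U v) ≤ d v := fun v => by
      rw [← hdim]; exact Submodule.finrank_le _
    exact hgen _ hne0 hned hle hint
  refine ⟨key, fun U hU1 hU2 hb ht => ?_⟩
  rcases key U hU1 hU2 with h | h
  · exact absurd h hb
  · exact absurd h ht
end

section
/- Let F_q be a finite field with q elements, Q a quiver, and W an absolutely indecomposable finite-dimensional F_q-representation of Q. Then the residue field End_Q(W) / End_Q^nil(W) is isomorphic to F_q, and the cardinalities satisfy (q − 1) · |End_Q(W)| = q · |Aut_Q(W)|. -/
open scoped TensorProduct

section Aux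

variable {k K : Type} [Field k] [Field K] [Algebra k K]

/-- A `K`-linear functional on `K ⊗[k] M` built from a `k`-functional on `M`. -/
noncomputable def auxFun {M : Type} [AddCommGroup M] [Module k M] (ψ : M →ₗ[k] k) :
    (K ⊗[k] M) →ₗ[K] K :=
  (Algebra.TensorProduct.rid k K K).toLinearMap.comp (ψ.baseChange K)

lemma auxFun_tmul {M : Type} [AddCommGroup M] [Module k M] (ψ : M →ₗ[k] k) (a : K) (x : M) :
    auxFun ψ (a ⊗ₜ[k] x) = ψ x • a := by
  simp [auxFun]

lemma aux_one_tmul_ne_zero {M : Type} [AddCommGroup M] [Module k M] {x : M} (hx : x ≠ 0) :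
    (1 : K) ⊗ₜ[k] x ≠ 0 := by
  obtain ⟨ψ, hψ⟩ : ∃ ψ : Module.Dual k M, ψ x ≠ 0 := by
    by_contra h
    push_neg at h
    exact hx ((Module.forall_dual_apply_eq_zero_iff k x).mp h)
  intro h
  have h2 := congrArg (auxFun (K := K) ψ) h
  rw [auxFun_tmul, map_zero, ← Algebra.algebraMap_eq_smul_one] at h2
  exact hψ (by simpa using (algebraMap k K).injective (by simpa using h2))

lemma aux_baseChange_eq_zero {M N : Type} [AddCommGroup M] [Module k M] [AddCommGroup N]
    [Module k N] {h : M →ₗ[k] N} (H : h.baseChange K = 0) : h = 0 := by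
  ext x
  by_contra hx
  apply aux_one_tmul_ne_zero (k := k) (K := K) hx
  calc (1 : K) ⊗ₜ[k] (h x) = h.baseChange K ((1 : K) ⊗ₜ[k] x) := by rw [LinearMap.baseChange_tmul]
  _ = 0 := by rw [H]; rfl

lemma aux_scalar {M : Type} [AddCommGroup M] [Module k M] {x y : M} (hx : x ≠ 0) {c : K}
    (h : (1 : K) ⊗ₜ[k] y = c • ((1 : K) ⊗ₜ[k] x)) : ∃ a : k, algebraMap k K a = c := by
  obtain ⟨ψ', hψ'⟩ : ∃ ψ : Module.Dual k M, ψ x ≠ 0 := by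
    by_contra hcon
    push_neg at hcon
    exact hx ((Module.forall_dual_apply_eq_zero_iff k x).mp hcon)
  set ψ : M →ₗ[k] k := (ψ' x)⁻¹ • ψ' with hψdef
  have hψx : ψ x = 1 := by simp [hψdef, inv_mul_cancel₀ hψ']
  refine ⟨ψ y, ?_⟩
  have h2 := congrArg (auxFun (K := K) ψ) h
  rw [auxFun_tmul, map_smul, auxFun_tmul, hψx] at h2
  simpa [Algebra.algebraMap_eq_smul_one] using h2

lemma aux_comm_pow {R M N : Type} [CommRing R] [AddCommGroup M] [Module R M] [AddCommGroup N]
    [Module R N] {g : Module.End R M} {g' : Module.End R N} {φ : M →ₗ[R] N}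
    (h : ∀ x, φ (g x) = g' (φ x)) (n : ℕ) : ∀ x, φ ((g ^ n) x) = (g' ^ n) (φ x) := by
  induction n with
  | zero => simp
  | succ n ih =>
    intro x
    rw [pow_succ, pow_succ, Module.End.mul_apply, Module.End.mul_apply, ih (g x), h x]

end Aux

set_option maxHeartbeats 1000000 in
/-- Let `F_q` be a finite field with `q` elements and `W` an absolutely
indecomposable finite-dimensional `F_q`-representation of a quiver `Q` (i.e. the base
change of `W` to the algebraic closure is indecomposable). Then the residue field
`End_Q(W)/End_Q^nil(W)` is `F_q` itself — every endomorphism is, modulo a nilpotent, a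
unique scalar — and `(q − 1) · |End_Q(W)| = q · |Aut_Q(W)|`. -/
theorem stmt_9 (k : Type) [Field k] [Fintype k] (V A : Type) [Fintype V] [Fintype A]
    (hd tl : A → V)
    (W : V → Type)
    [∀ v, AddCommGroup (W v)] [∀ v, Module k (W v)] [∀ v, FiniteDimensional k (W v)]
    (φ : ∀ a, W (tl a) →ₗ[k] W (hd a))
    -- W ⊗ k̄ is nonzero
    (habs0 : ∃ v, ∃ x : AlgebraicClosure k ⊗[k] W v, x ≠ 0)
    -- W ⊗ k̄ is indecomposable
    (habs : ∀ U U' : ∀ v, Submodule (AlgebraicClosure k) (AlgebraicClosure k ⊗[k] W v),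
      (∀ a, ∀ x ∈ U (tl a), (φ a).baseChange (AlgebraicClosure k) x ∈ U (hd a)) →
      (∀ a, ∀ x ∈ U' (tl a), (φ a).baseChange (AlgebraicClosure k) x ∈ U' (hd a)) →
      (∀ v, IsCompl (U v) (U' v)) →
      (∀ v, U v = ⊥) ∨ (∀ v, U' v = ⊥)) :
    -- the residue field End_Q(W)/End_Q^nil(W) is F_q:
    (∀ f : ∀ v, Module.End k (W v),
      (∀ a, (f (hd a)).comp (φ a) = (φ a).comp (f (tl a))) →
      ∃! c : k, IsNilpotent (f - c • (1 : ∀ v, Module.End k (W v)))) ∧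
    -- (q − 1) · |End_Q(W)| = q · |Aut_Q(W)|:
    (Fintype.card k - 1) *
        Nat.card {f : ∀ v, Module.End k (W v) //
          ∀ a, (f (hd a)).comp (φ a) = (φ a).comp (f (tl a))}
      = Fintype.card k *
        Nat.card {f : ∀ v, Module.End k (W v) //
          (∀ a, (f (hd a)).comp (φ a) = (φ a).comp (f (tl a))) ∧
          ∀ v, Function.Bijective (f v)} := by

  classical
  set K := AlgebraicClosure k with hKdef
  obtain ⟨v₀, xb₀, hxb₀⟩ := habs0
  -- `W v₀` is nontrivial
  obtain ⟨x₀, hx₀⟩ : ∃ x : W v₀, x ≠ 0 := by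
    by_contra hcon
    push_neg at hcon
    haveI : Subsingleton (W v₀) := ⟨fun a b => by rw [hcon a, hcon b]⟩
    apply hxb₀
    have : ∀ z : K ⊗[k] W v₀, z = 0 := by
      intro z
      induction z using TensorProduct.induction_on with
      | zero => rfl
      | tmul a m => rw [hcon m, TensorProduct.tmul_zero]
      | add x y hx hy => rw [hx, hy, add_zero]
    exact this xb₀
  -- characteristic
  set p := ringChar k with hpdef
  haveI hp : Fact p.Prime := ⟨CharP.char_is_prime k p⟩
  haveI : CharP K p := charP_of_injective_algebraMap (algebraMap k K).injective p
  have hfrobK : ∀ (m : ℕ) (a b : K), a ^ p ^ m = b ^ p ^ m → a = b := by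
    intro m a b hab
    have h1 : (a - b) ^ p ^ m = 0 := by
      rw [sub_pow_char_pow, hab, sub_self]
    have := pow_eq_zero_iff (pow_ne_zero m hp.out.ne_zero) |>.mp h1
    exact sub_eq_zero.mp this
  have hfrobk : ∀ (m : ℕ) (a : k), ∃ b : k, b ^ p ^ m = a := by
    intro m
    have hinj : Function.Injective (fun b : k => b ^ p ^ m) := by
      intro a b hab
      have h1 : (a - b) ^ p ^ m = 0 := by
        rw [sub_pow_char_pow]; simpa [sub_eq_zero] using hab
      exact sub_eq_zero.mp (pow_eq_zero_iff (pow_ne_zero m hp.out.ne_zero) |>.mp h1)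
    exact fun a => Finite.injective_iff_surjective.mp hinj a
  -- Part 1
  have key : ∀ f : ∀ v, Module.End k (W v),
      (∀ a, (f (hd a)).comp (φ a) = (φ a).comp (f (tl a))) →
      ∃! c : k, IsNilpotent (f - c • (1 : ∀ v, Module.End k (W v))) := by
    intro f hf
    set F : ∀ v, Module.End K (K ⊗[k] W v) := fun v => (f v).baseChange K with hFdef
    haveI : Nontrivial (K ⊗[k] W v₀) := nontrivial_of_ne xb₀ 0 hxb₀
    obtain ⟨c, hc⟩ := Module.End.exists_eigenvalue (F v₀)
    -- pointwise commutation after base change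
    have hcomm : ∀ a (x : K ⊗[k] W (tl a)),
        (φ a).baseChange K (F (tl a) x) = F (hd a) ((φ a).baseChange K x) := by
      intro a x
      have h1 := congrArg (LinearMap.baseChange K) (hf a)
      rw [LinearMap.baseChange_comp, LinearMap.baseChange_comp] at h1
      exact (LinearMap.ext_iff.mp h1.symm x)
    have hcommshift : ∀ a (μ : K) (x : K ⊗[k] W (tl a)),
        (φ a).baseChange K ((F (tl a) - μ • 1) x) = (F (hd a) - μ • 1) ((φ a).baseChange K x) := by
      intro a μ x
      simp only [LinearMap.sub_apply, LinearMap.smul_apply, Module.End.one_apply, map_sub,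
        map_smul, hcomm a x]
    have hmap : ∀ a (μ : K), ∀ x ∈ (F (tl a)).maxGenEigenspace μ,
        (φ a).baseChange K x ∈ (F (hd a)).maxGenEigenspace μ := by
      intro a μ x hx
      rw [Module.End.mem_maxGenEigenspace] at hx ⊢
      obtain ⟨n, hn⟩ := hx
      refine ⟨n, ?_⟩
      rw [← aux_comm_pow (hcommshift a μ) n x, hn, map_zero]
    set U : ∀ v, Submodule K (K ⊗[k] W v) := fun v => (F v).maxGenEigenspace c with hUdef
    set U' : ∀ v, Submodule K (K ⊗[k] W v) :=
      fun v => ⨆ μ, ⨆ (_ : μ ≠ c), (F v).maxGenEigenspace μ with hU'def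
    have hU'inv : ∀ a, ∀ x ∈ U' (tl a), (φ a).baseChange K x ∈ U' (hd a) := by
      intro a x hx
      have hle : Submodule.map ((φ a).baseChange K) (U' (tl a)) ≤ U' (hd a) := by
        rw [hU'def]
        simp only [Submodule.map_iSup]
        refine iSup_le fun μ => iSup_le fun hμ => ?_
        refine le_trans (Submodule.map_le_iff_le_comap.mpr fun y hy => Submodule.mem_comap.mpr (hmap a μ y hy))
          (le_iSup_of_le μ (le_iSup_of_le hμ le_rfl))
      exact hle ⟨x, hx, rfl⟩
    have hcompl : ∀ v, IsCompl (U v) (U' v) := by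
      intro v
      constructor
      · exact (Module.End.independent_maxGenEigenspace (F v)) c
      · rw [codisjoint_iff]
        apply le_antisymm le_top
        rw [← Module.End.iSup_maxGenEigenspace_eq_top (F v)]
        refine iSup_le fun μ => ?_
        rcases eq_or_ne μ c with rfl | hμ
        · exact le_sup_of_le_left le_rfl
        · exact le_sup_of_le_right (le_iSup_of_le μ (le_iSup_of_le hμ le_rfl))
    have hUbot : ∀ v, U' v = ⊥ := by
      rcases habs U U' (fun a x hx => hmap a c x hx) hU'inv hcompl with hU | hU'
      · exfalso
        obtain ⟨y, hy⟩ := hc.exists_hasEigenvector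
        have hymem : y ∈ U v₀ := by
          rw [hUdef, Module.End.mem_maxGenEigenspace]
          exact ⟨1, by simpa [sub_eq_zero] using hy.apply_eq_smul⟩
        rw [hU v₀] at hymem
        exact hy.2 (by simpa using hymem)
      · exact hU'
    have htop : ∀ v, (F v).maxGenEigenspace c = ⊤ := by
      intro v
      rw [← Module.End.iSup_maxGenEigenspace_eq_top (F v)]
      apply le_antisymm (le_iSup _ c)
      refine iSup_le fun μ => ?_
      rcases eq_or_ne μ c with rfl | hμ
      · exact le_rfl
      · have h1 : (F v).maxGenEigenspace μ ≤ U' v :=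
          le_iSup_of_le μ (le_iSup_of_le hμ le_rfl)
        rw [hUbot v] at h1
        exact h1.trans bot_le
    have hnilK : ∀ v, IsNilpotent (F v - c • 1) := by
      intro v
      rw [LinearMap.isNilpotent_iff_charpoly, LinearMap.charpoly_eq_X_pow_iff]
      intro x
      have : x ∈ (F v).maxGenEigenspace c := (htop v).symm ▸ Submodule.mem_top
      rw [Module.End.mem_maxGenEigenspace] at this
      exact this
    -- descend the eigenvalue to `k`
    obtain ⟨n₀, hn₀⟩ := hnilK v₀
    obtain ⟨m, hm⟩ : ∃ m, n₀ ≤ p ^ m := ⟨n₀, (Nat.lt_pow_self (n := n₀) hp.out.one_lt).le⟩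
    have hQ : (F v₀ - c • 1) ^ p ^ m = 0 := by
      rw [← Nat.sub_add_cancel hm, pow_add, hn₀, mul_zero]
    haveI : Nontrivial (Module.End K (K ⊗[k] W v₀)) := by
      refine ⟨1, 0, fun hmul => hxb₀ ?_⟩
      have := LinearMap.ext_iff.mp hmul xb₀
      simpa using this
    haveI : CharP (Module.End K (K ⊗[k] W v₀)) p :=
      charP_of_injective_algebraMap (algebraMap K (Module.End K (K ⊗[k] W v₀))).injective p
    have hcomm10 : Commute (F v₀) (c • (1 : Module.End K (K ⊗[k] W v₀))) :=
      (Commute.one_right (F v₀)).smul_right c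
    have hpowEq : F v₀ ^ p ^ m = (c ^ p ^ m) • (1 : Module.End K (K ⊗[k] W v₀)) := by
      have h1 := sub_pow_char_pow_of_commute (R := Module.End K (K ⊗[k] W v₀)) (p := p) (n := m) hcomm10
      rw [hQ] at h1
      have h2 : F v₀ ^ p ^ m = (c • (1 : Module.End K (K ⊗[k] W v₀))) ^ p ^ m :=
        sub_eq_zero.mp h1.symm
      rw [h2, smul_pow, one_pow]
    obtain ⟨a, ha⟩ : ∃ a : k, algebraMap k K a = c ^ p ^ m := by
      have h1 : ((f v₀) ^ p ^ m).baseChange K ((1 : K) ⊗ₜ[k] x₀)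
          = (c ^ p ^ m) • ((1 : K) ⊗ₜ[k] x₀) := by
        rw [LinearMap.baseChange_pow]
        show (F v₀ ^ p ^ m) ((1 : K) ⊗ₜ[k] x₀) = _
        rw [hpowEq]
        simp
      rw [LinearMap.baseChange_tmul] at h1
      exact aux_scalar hx₀ h1
    obtain ⟨c₀, hc₀⟩ := hfrobk m a
    have hcc₀ : algebraMap k K c₀ = c := by
      apply hfrobK m
      rw [← map_pow, hc₀, ha]
    -- nilpotency over k
    have hbcsub : ∀ v, (f v - c₀ • 1).baseChange K = F v - c • 1 := by
      intro v
      rw [LinearMap.baseChange_sub, LinearMap.baseChange_smul, LinearMap.baseChange_one]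
      rw [hFdef]
      congr 1
      rw [← hcc₀, algebraMap_smul]
    have hnilk : ∀ v, IsNilpotent (f v - c₀ • 1) := by
      intro v
      obtain ⟨n, hn⟩ := hnilK v
      refine ⟨n, aux_baseChange_eq_zero (K := K) ?_⟩
      rw [LinearMap.baseChange_pow, hbcsub v, hn]
    choose nn hnn using hnilk
    refine ⟨c₀, ⟨Finset.univ.sup nn, ?_⟩, ?_⟩
    · funext v
      have h1 : ((f - c₀ • (1 : ∀ v, Module.End k (W v))) ^ Finset.univ.sup nn) v
          = (f v - c₀ • 1) ^ Finset.univ.sup nn := by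
        simp [Pi.pow_apply]
      rw [h1]
      have hle : nn v ≤ Finset.univ.sup nn := Finset.le_sup (Finset.mem_univ v)
      rw [← Nat.sub_add_cancel hle, pow_add, hnn v, mul_zero]
      rfl
    · -- uniqueness
      intro c₁ hc₁
      by_contra hne
      have hnil₀ : IsNilpotent (f - c₀ • (1 : ∀ v, Module.End k (W v))) := by
        refine ⟨Finset.univ.sup nn, ?_⟩
        funext v
        have h1 : ((f - c₀ • (1 : ∀ v, Module.End k (W v))) ^ Finset.univ.sup nn) v
            = (f v - c₀ • 1) ^ Finset.univ.sup nn := by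
          simp [Pi.pow_apply]
        rw [h1]
        have hle : nn v ≤ Finset.univ.sup nn := Finset.le_sup (Finset.mem_univ v)
        rw [← Nat.sub_add_cancel hle, pow_add, hnn v, mul_zero]
        rfl
      have hcm : Commute (f - c₁ • (1 : ∀ v, Module.End k (W v)))
          (f - c₀ • (1 : ∀ v, Module.End k (W v))) := by
        have h1 : Commute f ((c₀ : k) • (1 : ∀ v, Module.End k (W v))) :=
          (Commute.one_right f).smul_right c₀
        have h2 : Commute f ((c₁ : k) • (1 : ∀ v, Module.End k (W v))) :=
          (Commute.one_right f).smul_right c₁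
        have h3 : Commute ((c₁ : k) • (1 : ∀ v, Module.End k (W v)))
            ((c₀ : k) • (1 : ∀ v, Module.End k (W v))) :=
          ((Commute.one_right (1 : ∀ v, Module.End k (W v))).smul_right c₀).smul_left c₁
        exact ((Commute.refl f).sub_left h2.symm).sub_right
          (h1.sub_left h3)
      have hdiff : IsNilpotent ((c₀ - c₁) • (1 : ∀ v, Module.End k (W v))) := by
        have h1 := hcm.isNilpotent_sub hc₁ hnil₀
        have h2 : (f - c₁ • (1 : ∀ v, Module.End k (W v)))
            - (f - c₀ • (1 : ∀ v, Module.End k (W v)))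
            = (c₀ - c₁) • (1 : ∀ v, Module.End k (W v)) := by
          rw [sub_sub_sub_cancel_left, ← sub_smul]
        rwa [h2] at h1
      obtain ⟨n, hn⟩ := hdiff
      have h3 : ((c₀ - c₁) ^ n) • x₀ = 0 := by
        have h4 := congrFun hn v₀
        have h5 : (((c₀ - c₁) • (1 : ∀ v, Module.End k (W v))) ^ n) v₀
            = ((c₀ - c₁) ^ n) • (1 : Module.End k (W v₀)) := by
          simp [Pi.pow_apply, smul_pow]
        rw [h5] at h4
        have := LinearMap.ext_iff.mp h4 x₀
        simpa using this
      have h6 : (c₀ - c₁) ^ n = 0 := by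
        rcases smul_eq_zero.mp h3 with h | h
        · exact h
        · exact absurd h hx₀
      exact pow_ne_zero n (sub_ne_zero.mpr fun h => hne h.symm) h6
  -- Part 2
  refine ⟨key, ?_⟩
  have hnontrivEnd : Nontrivial (Module.End k (W v₀)) := by
    refine ⟨1, 0, fun hmul => hx₀ ?_⟩
    have := LinearMap.ext_iff.mp hmul x₀
    simpa using this
  -- bijectivity criterion
  have hbij : ∀ (f : ∀ v, Module.End k (W v)),
      (∀ a, (f (hd a)).comp (φ a) = (φ a).comp (f (tl a))) →
      ∀ c : k, IsNilpotent (f - c • (1 : ∀ v, Module.End k (W v))) →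
      (c ≠ 0 ↔ ∀ v, Function.Bijective (f v)) := by
    intro f hf c hnil
    constructor
    · intro hc v
      have hunit : IsUnit f := by
        have hr : f = (c • (1 : ∀ v, Module.End k (W v)))
            * (1 + c⁻¹ • (f - c • (1 : ∀ v, Module.End k (W v)))) := by
          rw [mul_add, mul_one, smul_mul_assoc, one_mul, smul_smul,
            mul_inv_cancel₀ hc, one_smul]
          abel
        rw [hr]
        refine IsUnit.mul ?_ ?_
        · refine ⟨⟨c • (1 : ∀ v, Module.End k (W v)), c⁻¹ • (1 : ∀ v, Module.End k (W v)),
            ?_, ?_⟩, rfl⟩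
          · rw [smul_mul_smul_comm, mul_one, mul_inv_cancel₀ hc, one_smul]
          · rw [smul_mul_smul_comm, mul_one, inv_mul_cancel₀ hc, one_smul]
        · refine IsNilpotent.isUnit_one_add ?_
          obtain ⟨n, hn⟩ := hnil
          exact ⟨n, by rw [smul_pow, hn, smul_zero]⟩
      have hv : IsUnit (f v) := by
        have := hunit.map (Pi.evalRingHom (fun v => Module.End k (W v)) v)
        simpa using this
      exact (Module.End.isUnit_iff (f v)).mp hv
    · intro hb
      by_contra hc
      rw [hc] at hnil
      simp only [zero_smul, sub_zero] at hnil
      obtain ⟨n, hn⟩ := hnil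
      have h1 : Function.Bijective ((f v₀) ^ n) := by
        clear hn
        induction n with
        | zero => simpa [Module.End.coe_one] using Function.bijective_id
        | succ n ih =>
          rw [pow_succ]
          have : ⇑((f v₀) ^ n * (f v₀)) = ⇑((f v₀) ^ n) ∘ ⇑(f v₀) := rfl
          rw [this]
          exact ih.comp (hb v₀)
      have h2 : ((f v₀) ^ n) x₀ = 0 := by
        have := congrFun hn v₀
        have h3 : ((f ^ n) v₀) = (f v₀) ^ n := by simp [Pi.pow_apply]
        rw [h3] at this
        rw [this]
        rfl
      exact hx₀ (h1.injective (by simpa using h2))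
  -- the canonical scalar of an endomorphism
  let comm : (∀ v, Module.End k (W v)) → Prop :=
    fun f => ∀ a, (f (hd a)).comp (φ a) = (φ a).comp (f (tl a))
  have hcomm_smul : ∀ c : k, comm (c • (1 : ∀ v, Module.End k (W v))) := by
    intro c a
    ext x
    simp
  have hcomm_sub : ∀ f g, comm f → comm g → comm (f - g) := by
    intro f g hf hg a
    ext x
    simp only [Pi.sub_apply, LinearMap.coe_comp, Function.comp_apply, LinearMap.sub_apply,
      map_sub]
    rw [← LinearMap.comp_apply, ← LinearMap.comp_apply, hf a, hg a]
    simp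
  have hcomm_add : ∀ f g, comm f → comm g → comm (f + g) := by
    intro f g hf hg a
    ext x
    simp only [Pi.add_apply, LinearMap.coe_comp, Function.comp_apply, LinearMap.add_apply,
      map_add]
    rw [← LinearMap.comp_apply, ← LinearMap.comp_apply, hf a, hg a]
    simp
  let cOf : {f : ∀ v, Module.End k (W v) // comm f} → k := fun f => (key f.1 f.2).choose
  have hcOf_nil : ∀ f, IsNilpotent (f.1 - cOf f • (1 : ∀ v, Module.End k (W v))) :=
    fun f => (key f.1 f.2).choose_spec.1
  have hcOf_unique : ∀ f (c : k), IsNilpotent (f.1 - c • (1 : ∀ v, Module.End k (W v))) →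
      c = cOf f := fun f c hc => (key f.1 f.2).choose_spec.2 c hc
  let Nn := {g : ∀ v, Module.End k (W v) // comm g ∧ IsNilpotent g}
  let eE : {f : ∀ v, Module.End k (W v) // comm f} ≃ k × Nn :=
    { toFun := fun f => (cOf f, ⟨f.1 - cOf f • 1,
        hcomm_sub _ _ f.2 (hcomm_smul _), hcOf_nil f⟩)
      invFun := fun cg => ⟨cg.2.1 + cg.1 • 1, hcomm_add _ _ cg.2.2.1 (hcomm_smul _)⟩
      left_inv := fun f => by
        apply Subtype.ext
        simp [sub_add_cancel]
      right_inv := fun cg => by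
        obtain ⟨c, g⟩ := cg
        have hc : c = cOf ⟨g.1 + c • 1, hcomm_add _ _ g.2.1 (hcomm_smul _)⟩ := by
          apply hcOf_unique
          rw [add_sub_cancel_right]
          exact g.2.2
        refine Prod.ext ?_ ?_
        · exact hc.symm
        · apply Subtype.ext
          simp [← hc] }
  let eA : {f : ∀ v, Module.End k (W v) // comm f ∧ ∀ v, Function.Bijective (f v)}
      ≃ {c : k // c ≠ 0} × Nn :=
    { toFun := fun f => (⟨cOf ⟨f.1, f.2.1⟩,
        (hbij f.1 f.2.1 _ (hcOf_nil ⟨f.1, f.2.1⟩)).mpr f.2.2⟩,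
        ⟨f.1 - cOf ⟨f.1, f.2.1⟩ • 1,
          hcomm_sub _ _ f.2.1 (hcomm_smul _), hcOf_nil ⟨f.1, f.2.1⟩⟩)
      invFun := fun cg => ⟨cg.2.1 + cg.1.1 • 1,
        ⟨hcomm_add _ _ cg.2.2.1 (hcomm_smul _), by
          refine (hbij (cg.2.1 + cg.1.1 • 1) (hcomm_add _ _ cg.2.2.1 (hcomm_smul _))
            cg.1.1 ?_).mp cg.1.2
          rw [add_sub_cancel_right]
          exact cg.2.2.2⟩⟩
      left_inv := fun f => by
        apply Subtype.ext
        simp [sub_add_cancel]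
      right_inv := fun cg => by
        obtain ⟨c, g⟩ := cg
        have hc : c.1 = cOf ⟨g.1 + c.1 • 1, hcomm_add _ _ g.2.1 (hcomm_smul _)⟩ := by
          apply hcOf_unique
          rw [add_sub_cancel_right]
          exact g.2.2
        refine Prod.ext ?_ ?_
        · exact Subtype.ext hc.symm
        · apply Subtype.ext
          simp [← hc] }
  have hcardE : Nat.card {f : ∀ v, Module.End k (W v) // comm f}
      = Fintype.card k * Nat.card Nn := by
    rw [Nat.card_congr eE, Nat.card_prod, Nat.card_eq_fintype_card]
  have hcardA : Nat.card {f : ∀ v, Module.End k (W v) //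
      comm f ∧ ∀ v, Function.Bijective (f v)}
      = (Fintype.card k - 1) * Nat.card Nn := by
    rw [Nat.card_congr eA, Nat.card_prod]
    congr 1
    rw [Nat.card_congr unitsEquivNeZero.symm, Nat.card_eq_fintype_card, Fintype.card_units]
  rw [hcardE, hcardA]
  ring
end

section
/- Let k be a field, Q = (V, A, h, t) a quiver, θ ∈ ℤ^V (regarded in k via ℤ → k), and W = ((W_v), (φ_a)_{a∈A}) a finite-dimensional k-representation of Q. Then there exists a tuple (φ_{a*})_{a∈A} with φ_{a*} : W_{h(a)} → W_{t(a)} such that ((W_v), (φ_a), (φ_{a*})) is a representation of the doubled quiver Q̄ satisfying the relations R_θ, if and only if Σ_{v∈V} θ_v · tr(f_v) = 0 in k for every endomorphism f = (f_v)_{v∈V} ∈ End_Q(W). -/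
open LinearMap TensorProduct Finset

lemma aux_sep (k : Type) [Field k] {X Y : Type} [AddCommGroup X] [Module k X]
    [AddCommGroup Y] [Module k Y] [FiniteDimensional k Y]
    (χ : X →ₗ[k] Y) (h : ∀ ψ : Y →ₗ[k] X, LinearMap.trace k Y (χ ∘ₗ ψ) = 0) : χ = 0 := by
  ext x
  rw [LinearMap.zero_apply, ← Module.forall_dual_apply_eq_zero_iff k]
  intro ξ
  have hc : χ ∘ₗ ξ.smulRight x = dualTensorHom k Y Y (ξ ⊗ₜ[k] χ x) := by
    ext y; simp [dualTensorHom_apply]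
  have := h (ξ.smulRight x)
  rw [hc, trace_eq_contract_apply, contractLeft_apply] at this
  exact this



/-- (Lifting criterion, Crawley-Boevey.) A finite-dimensional
`k`-representation `W = ((W v), (φ a))` of `Q` lifts to a representation
`((W v), (φ a), (ψ a))` of the doubled quiver `Q̄` satisfying the relations `R_θ`
if and only if `Σ_v θ v · tr(f v) = 0` in `k` for every endomorphism `f ∈ End_Q(W)`. -/
theorem stmt_11 (k : Type) [Field k] (V A : Type) [Fintype V] [Fintype A] [DecidableEq V]
    (hd tl : A → V) (θ : V → ℤ)
    (W : V → Type)
    [∀ v, AddCommGroup (W v)] [∀ v, Module k (W v)] [∀ v, FiniteDimensional k (W v)]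
    (φ : ∀ a, W (tl a) →ₗ[k] W (hd a)) :
    (∃ ψ : ∀ a, W (hd a) →ₗ[k] W (tl a), ∀ v,
        (∑ a, Pi.single (M := fun v => W v →ₗ[k] W v) (hd a) ((φ a).comp (ψ a))) v
          - (∑ a, Pi.single (M := fun v => W v →ₗ[k] W v) (tl a) ((ψ a).comp (φ a))) v
        = ((θ v : k)) • (LinearMap.id : W v →ₗ[k] W v)) ↔
    (∀ f : ∀ v, W v →ₗ[k] W v,
      (∀ a, (f (hd a)).comp (φ a) = (φ a).comp (f (tl a))) →
      ∑ v, (θ v : k) * LinearMap.trace k (W v) (f v) = 0) := by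
  classical
  -- the space of endomorphism tuples and the map T
  set T : (∀ a, W (hd a) →ₗ[k] W (tl a)) →ₗ[k] (∀ v, W v →ₗ[k] W v) :=
    (∑ a, (LinearMap.single k (fun v => W v →ₗ[k] W v) (hd a)).comp
        ((LinearMap.llcomp k (W (hd a)) (W (tl a)) (W (hd a)) (φ a)).comp
          (LinearMap.proj (R := k) (φ := fun a => W (hd a) →ₗ[k] W (tl a)) a)))
    - (∑ a, (LinearMap.single k (fun v => W v →ₗ[k] W v) (tl a)).comp
        ((LinearMap.lcomp k (W (tl a)) (φ a)).comp
          (LinearMap.proj (R := k) (φ := fun a => W (hd a) →ₗ[k] W (tl a)) a))) with hTdef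
  have hT : ∀ (ψ : ∀ a, W (hd a) →ₗ[k] W (tl a)) (v : V), T ψ v =
      (∑ a, Pi.single (M := fun v => W v →ₗ[k] W v) (hd a) ((φ a).comp (ψ a))) v
        - (∑ a, Pi.single (M := fun v => W v →ₗ[k] W v) (tl a) ((ψ a).comp (φ a))) v := by
    intro ψ v
    simp [hTdef, LinearMap.sum_apply, LinearMap.single_apply, LinearMap.llcomp_apply,
      LinearMap.lcomp_apply, LinearMap.proj_apply]
    rfl
  -- the target element
  set η : ∀ v, W v →ₗ[k] W v := fun v => ((θ v : k)) • (LinearMap.id : W v →ₗ[k] W v) with hη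
  -- the trace pairing
  set B : (∀ v, W v →ₗ[k] W v) →ₗ[k] Module.Dual k (∀ v, W v →ₗ[k] W v) :=
    LinearMap.mk₂ k (fun f e => ∑ v, LinearMap.trace k (W v) ((f v) ∘ₗ (e v)))
      (by intro f f' e
          simp [Pi.add_apply, LinearMap.add_comp, map_add, Finset.sum_add_distrib])
      (by intro c f e
          simp [Pi.smul_apply, LinearMap.smul_comp, map_smul, smul_eq_mul, Finset.mul_sum])
      (by intro f e e'
          simp [Pi.add_apply, LinearMap.comp_add, map_add, Finset.sum_add_distrib])
      (by intro c f e
          simp [Pi.smul_apply, LinearMap.comp_smul, map_smul, smul_eq_mul, Finset.mul_sum]) with hB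
  have hBapp : ∀ f e : ∀ v, W v →ₗ[k] W v, B f e = ∑ v, LinearMap.trace k (W v) ((f v) ∘ₗ (e v)) := by
    intro f e; rfl
  -- summing against a `Pi.single`
  have hsingle : ∀ (f : ∀ v, W v →ₗ[k] W v) (i : V) (x : W i →ₗ[k] W i),
      ∑ v, LinearMap.trace k (W v) ((f v) ∘ₗ (Pi.single (M := fun v => W v →ₗ[k] W v) i x) v)
        = LinearMap.trace k (W i) ((f i) ∘ₗ x) := by
    intro f i x
    rw [Finset.sum_eq_single i]
    · rw [Pi.single_eq_same]
    · intro v _ hv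
      rw [Pi.single_eq_of_ne hv, LinearMap.comp_zero, map_zero]
    · intro h; exact absurd (Finset.mem_univ i) h
  -- the key adjointness computation
  have key : ∀ (f : ∀ v, W v →ₗ[k] W v) (ψ : ∀ a, W (hd a) →ₗ[k] W (tl a)), B f (T ψ) =
      ∑ a, LinearMap.trace k (W (hd a))
        (((f (hd a)).comp (φ a) - (φ a).comp (f (tl a))) ∘ₗ ψ a) := by
    intro f ψ
    rw [hBapp]
    have step1 : ∀ v, LinearMap.trace k (W v) ((f v) ∘ₗ (T ψ v)) =
        (∑ a, LinearMap.trace k (W v)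
            ((f v) ∘ₗ (Pi.single (M := fun v => W v →ₗ[k] W v) (hd a) ((φ a).comp (ψ a))) v))
        - (∑ a, LinearMap.trace k (W v)
            ((f v) ∘ₗ (Pi.single (M := fun v => W v →ₗ[k] W v) (tl a) ((ψ a).comp (φ a))) v)) := by
      intro v
      rw [hT, LinearMap.comp_sub, map_sub, Finset.sum_apply, Finset.sum_apply]
      congr 1
      · rw [← map_sum (LinearMap.trace k (W v))]
        congr 1
        exact map_sum (LinearMap.llcomp k (W v) (W v) (W v) (f v)) _ _
      · rw [← map_sum (LinearMap.trace k (W v))]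
        congr 1
        exact map_sum (LinearMap.llcomp k (W v) (W v) (W v) (f v)) _ _
    calc ∑ v, LinearMap.trace k (W v) ((f v) ∘ₗ (T ψ v))
        = ∑ v, ((∑ a, LinearMap.trace k (W v)
            ((f v) ∘ₗ (Pi.single (M := fun v => W v →ₗ[k] W v) (hd a) ((φ a).comp (ψ a))) v))
          - (∑ a, LinearMap.trace k (W v)
            ((f v) ∘ₗ (Pi.single (M := fun v => W v →ₗ[k] W v) (tl a) ((ψ a).comp (φ a))) v))) := by
          exact Finset.sum_congr rfl fun v _ => step1 v
      _ = (∑ v, ∑ a, LinearMap.trace k (W v)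
            ((f v) ∘ₗ (Pi.single (M := fun v => W v →ₗ[k] W v) (hd a) ((φ a).comp (ψ a))) v))
          - (∑ v, ∑ a, LinearMap.trace k (W v)
            ((f v) ∘ₗ (Pi.single (M := fun v => W v →ₗ[k] W v) (tl a) ((ψ a).comp (φ a))) v)) := by
          rw [Finset.sum_sub_distrib]
      _ = (∑ a, LinearMap.trace k (W (hd a)) ((f (hd a)) ∘ₗ ((φ a).comp (ψ a))))
          - (∑ a, LinearMap.trace k (W (tl a)) ((f (tl a)) ∘ₗ ((ψ a).comp (φ a)))) := by
          congr 1
          · rw [Finset.sum_comm]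
            exact Finset.sum_congr rfl fun a _ => hsingle f (hd a) ((φ a).comp (ψ a))
          · rw [Finset.sum_comm]
            exact Finset.sum_congr rfl fun a _ => hsingle f (tl a) ((ψ a).comp (φ a))
      _ = ∑ a, LinearMap.trace k (W (hd a))
            (((f (hd a)).comp (φ a) - (φ a).comp (f (tl a))) ∘ₗ ψ a) := by
          rw [← Finset.sum_sub_distrib]
          refine Finset.sum_congr rfl fun a _ => ?_
          have h1 : LinearMap.trace k (W (hd a)) ((f (hd a)) ∘ₗ ((φ a).comp (ψ a)))
              = LinearMap.trace k (W (hd a)) (((f (hd a)).comp (φ a)) ∘ₗ ψ a) := by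
            rw [LinearMap.comp_assoc]
          have h2 : LinearMap.trace k (W (tl a)) ((f (tl a)) ∘ₗ ((ψ a).comp (φ a)))
              = LinearMap.trace k (W (hd a)) (((φ a).comp (f (tl a))) ∘ₗ ψ a) := by
            rw [← LinearMap.comp_assoc,
              LinearMap.trace_comp_comm' (φ a) ((f (tl a)) ∘ₗ ψ a),
              ← LinearMap.comp_assoc]
          rw [h1, h2, ← map_sub, ← LinearMap.sub_comp]
    -- end calc
  have hBη : ∀ f : ∀ v, W v →ₗ[k] W v, B f η = ∑ v, (θ v : k) * LinearMap.trace k (W v) (f v) := by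
    intro f
    rw [hBapp]
    refine Finset.sum_congr rfl fun v _ => ?_
    rw [hη]
    simp [LinearMap.comp_smul, smul_eq_mul]
  -- injectivity and surjectivity of B
  have hBinj : Function.Injective B := by
    rw [← LinearMap.ker_eq_bot, LinearMap.ker_eq_bot']
    intro f hf
    funext v
    refine aux_sep k (f v) fun ψ => ?_
    have := congrFun (congrArg DFunLike.coe hf) (Pi.single (M := fun v => W v →ₗ[k] W v) v ψ)
    rw [hBapp] at this
    rw [← hsingle f v ψ]
    simpa using this
  have hBsurj : Function.Surjective B := by
    have hfr : Module.finrank k (∀ v, W v →ₗ[k] W v) = Module.finrank k (Module.Dual k (∀ v, W v →ₗ[k] W v)) :=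
      (Subspace.dual_finrank_eq).symm
    exact (LinearMap.injective_iff_surjective_of_finrank_eq_finrank hfr).mp hBinj
  -- main equivalence
  have hLHS : (∃ ψ : ∀ a, W (hd a) →ₗ[k] W (tl a), ∀ v,
        (∑ a, Pi.single (M := fun v => W v →ₗ[k] W v) (hd a) ((φ a).comp (ψ a))) v
          - (∑ a, Pi.single (M := fun v => W v →ₗ[k] W v) (tl a) ((ψ a).comp (φ a))) v
        = ((θ v : k)) • (LinearMap.id : W v →ₗ[k] W v)) ↔ η ∈ LinearMap.range T := by
    constructor
    · rintro ⟨ψ, hψ⟩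
      exact ⟨ψ, funext fun v => by rw [hT]; exact hψ v⟩
    · rintro ⟨ψ, hψ⟩
      exact ⟨ψ, fun v => by rw [← hT, hψ]⟩
  rw [hLHS]
  constructor
  · rintro ⟨ψ, hψ⟩ f hf
    calc ∑ v, (θ v : k) * LinearMap.trace k (W v) (f v) = B f η := (hBη f).symm
      _ = B f (T ψ) := by rw [hψ]
      _ = ∑ a, LinearMap.trace k (W (hd a))
            (((f (hd a)).comp (φ a) - (φ a).comp (f (tl a))) ∘ₗ ψ a) := key f ψ
      _ = 0 := by
          refine Finset.sum_eq_zero fun a _ => ?_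
          rw [hf a, sub_self, LinearMap.zero_comp, map_zero]
  · intro H
    rw [← Subspace.forall_mem_dualAnnihilator_apply_eq_zero_iff]
    intro g hg
    obtain ⟨f, rfl⟩ := hBsurj g
    rw [Submodule.mem_dualAnnihilator] at hg
    have hfcomm : ∀ a, (f (hd a)).comp (φ a) = (φ a).comp (f (tl a)) := by
      intro a
      have h1 : ∀ ψa : W (hd a) →ₗ[k] W (tl a), LinearMap.trace k (W (hd a))
          (((f (hd a)).comp (φ a) - (φ a).comp (f (tl a))) ∘ₗ ψa) = 0 := by
        intro ψa
        have h2 := hg (T (Pi.single (M := fun a => W (hd a) →ₗ[k] W (tl a)) a ψa))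
          ⟨_, rfl⟩
        rw [key] at h2
        rw [Finset.sum_eq_single a] at h2
        · rwa [Pi.single_eq_same] at h2
        · intro b _ hb
          rw [Pi.single_eq_of_ne hb, LinearMap.comp_zero, map_zero]
        · intro h; exact absurd (Finset.mem_univ a) h
      have := aux_sep k _ h1
      exact sub_eq_zero.mp this
    rw [hBη]
    exact H f hfcomm
end

section
/- Let k be a field, Q = (V, A, h, t) a quiver, θ ∈ ℤ^V (regarded in k), and W = ((W_v), (φ_a)) a finite-dimensional k-representation of Q with dimension vector d. Define the k-linear map L_W : ∏_{a∈A} Hom_k(W_{h(a)}, W_{t(a)}) → ∏_{v∈V} End_k(W_v) by L_W((ψ_{a*})_{a∈A}) := (Σ_{a∈A, h(a)=v} φ_a ∘ ψ_{a*} − Σ_{a∈A, t(a)=v} ψ_{a*} ∘ φ_a)_{v∈V}. Then the set of tuples (φ_{a*}) such that ((W_v), (φ_a), (φ_{a*})) satisfies the relations R_θ is either empty or a coset of ker L_W, and dim_k ker L_W = dim_k End_Q(W) − ⟨d, d⟩_Q. -/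
set_option maxHeartbeats 1000000

open LinearMap Module

/-- Nondegeneracy of the trace pairing `Hom(U,M) × Hom(M,U) → k`. -/
lemma trace_pairing_nondeg {k U M : Type} [Field k]
    [AddCommGroup U] [Module k U] [FiniteDimensional k U]
    [AddCommGroup M] [Module k M] [FiniteDimensional k M] (g : M →ₗ[k] U)
    (h : ∀ ψ : U →ₗ[k] M, LinearMap.trace k U (g ∘ₗ ψ) = 0) : g = 0 := by
  ext y
  simp only [LinearMap.zero_apply]
  rw [← Module.forall_dual_apply_eq_zero_iff k]
  intro l
  have h1 : g ∘ₗ l.smulRight y = dualTensorHom k U U (l ⊗ₜ[k] g y) := by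
    ext u; simp
  have := h (l.smulRight y)
  rwa [h1, trace_eq_contract_apply, contractLeft_apply] at this



/-- For a finite-dimensional `k`-representation `W` of `Q` with
dimension vector `d`, consider the linear map
`L_W : ∏_a Hom(W (hd a), W (tl a)) → ∏_v End(W v)`,
`L_W ψ = (Σ_{a : hd a = v} φ a ∘ ψ a − Σ_{a : tl a = v} ψ a ∘ φ a)_v`.
The set of tuples `(φ_{a*})` such that `((W v), (φ a), (φ_{a*}))` satisfies the relations
`R_θ` is either empty or a coset of `ker L_W`, and
`dim ker L_W = dim End_Q(W) − ⟨d, d⟩_Q`. -/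
theorem stmt_13 (k : Type) [Field k] (V A : Type) [Fintype V] [Fintype A] [DecidableEq V]
    (hd tl : A → V) (θ : V → ℤ)
    (W : V → Type)
    [∀ v, AddCommGroup (W v)] [∀ v, Module k (W v)] [∀ v, FiniteDimensional k (W v)]
    (φ : ∀ a, W (tl a) →ₗ[k] W (hd a))
    -- L is the linear map L_W
    (L : (∀ a, W (hd a) →ₗ[k] W (tl a)) →ₗ[k] (∀ v, W v →ₗ[k] W v))
    (hL : ∀ ψ v, L ψ v
        = (∑ a, Pi.single (M := fun v => W v →ₗ[k] W v) (hd a) ((φ a).comp (ψ a))) v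
          - (∑ a, Pi.single (M := fun v => W v →ₗ[k] W v) (tl a) ((ψ a).comp (φ a))) v)
    -- E is the space of endomorphisms End_Q(W)
    (E : Submodule k (∀ v, W v →ₗ[k] W v))
    (hE : ∀ f, f ∈ E ↔ ∀ a, (f (hd a)).comp (φ a) = (φ a).comp (f (tl a))) :
    -- the set of solutions of the relations R_θ is empty or a coset of ker L:
    (∀ ψ₀ ψ : ∀ a, W (hd a) →ₗ[k] W (tl a),
      (∀ v, L ψ₀ v = ((θ v : k)) • (LinearMap.id : W v →ₗ[k] W v)) →
      ((∀ v, L ψ v = ((θ v : k)) • (LinearMap.id : W v →ₗ[k] W v)) ↔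
        ψ - ψ₀ ∈ LinearMap.ker L)) ∧
    -- dim ker L_W = dim End_Q(W) − ⟨d, d⟩_Q:
    (Module.finrank k (LinearMap.ker L) : ℤ)
      = (Module.finrank k E : ℤ)
        - (∑ v, (Module.finrank k (W v) : ℤ) * (Module.finrank k (W v) : ℤ)
            - ∑ a, (Module.finrank k (W (tl a)) : ℤ) * (Module.finrank k (W (hd a)) : ℤ)) := by
  classical
  constructor
  · -- coset statement
    intro ψ₀ ψ h₀
    rw [LinearMap.mem_ker, map_sub, sub_eq_zero]
    constructor
    · intro h
      funext v
      rw [h v, h₀ v]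
    · intro h v
      rw [show L ψ v = L ψ₀ v from congrFun h v, h₀ v]
  · -- dimension statement
    -- the "adjoint" map M
    set M : (∀ v, W v →ₗ[k] W v) →ₗ[k] (∀ a, W (tl a) →ₗ[k] W (hd a)) :=
      { toFun := fun f a => f (hd a) ∘ₗ φ a - φ a ∘ₗ f (tl a)
        map_add' := by
          intro f g; funext a; ext x
          simp only [Pi.add_apply, add_comp, comp_add, LinearMap.sub_apply, LinearMap.add_apply, comp_apply]
          abel
        map_smul' := by
          intro c f; funext a; ext x
          simp only [Pi.smul_apply, smul_comp, comp_smul, RingHom.id_apply, LinearMap.sub_apply,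
            LinearMap.smul_apply, comp_apply, smul_sub] } with hM
    have hMapp : ∀ f a, M f a = f (hd a) ∘ₗ φ a - φ a ∘ₗ f (tl a) := fun f a => rfl
    -- ker M = E
    have hkerM : LinearMap.ker M = E := by
      ext f
      rw [LinearMap.mem_ker, hE, funext_iff]
      constructor
      · intro h a
        have := h a
        rw [hMapp, Pi.zero_apply, sub_eq_zero] at this
        exact this
      · intro h a
        rw [hMapp, Pi.zero_apply, sub_eq_zero]
        exact h a
    -- trace pairing on ∏ End(W v)
    set ε : (∀ v, W v →ₗ[k] W v) →ₗ[k] Module.Dual k (∀ v, W v →ₗ[k] W v) :=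
      { toFun := fun f =>
          { toFun := fun x => ∑ v, trace k (W v) (f v ∘ₗ x v)
            map_add' := by
              intro x y
              simp only [Pi.add_apply, comp_add, map_add, Finset.sum_add_distrib]
            map_smul' := by
              intro c x
              simp only [Pi.smul_apply, comp_smul, map_smul, RingHom.id_apply, smul_eq_mul,
                Finset.mul_sum] }
        map_add' := by
          intro f g; refine LinearMap.ext fun x => ?_
          simp only [Pi.add_apply, add_comp, map_add, coe_mk, AddHom.coe_mk,
            Finset.sum_add_distrib, LinearMap.add_apply]
        map_smul' := by
          intro c f; refine LinearMap.ext fun x => ?_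
          simp only [Pi.smul_apply, smul_comp, map_smul, RingHom.id_apply, coe_mk, AddHom.coe_mk,
            smul_eq_mul, Finset.mul_sum, LinearMap.smul_apply] } with hε
    -- trace pairing on ∏ Hom(W tl a, W hd a)
    set B : (∀ a, W (tl a) →ₗ[k] W (hd a)) →ₗ[k] Module.Dual k (∀ a, W (hd a) →ₗ[k] W (tl a)) :=
      { toFun := fun g =>
          { toFun := fun x => ∑ a, trace k (W (hd a)) (g a ∘ₗ x a)
            map_add' := by
              intro x y
              simp only [Pi.add_apply, comp_add, map_add, Finset.sum_add_distrib]
            map_smul' := by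
              intro c x
              simp only [Pi.smul_apply, comp_smul, map_smul, RingHom.id_apply, smul_eq_mul,
                Finset.mul_sum] }
        map_add' := by
          intro f g; refine LinearMap.ext fun x => ?_
          simp only [Pi.add_apply, add_comp, map_add, coe_mk, AddHom.coe_mk,
            Finset.sum_add_distrib, LinearMap.add_apply]
        map_smul' := by
          intro c f; refine LinearMap.ext fun x => ?_
          simp only [Pi.smul_apply, smul_comp, map_smul, RingHom.id_apply, coe_mk, AddHom.coe_mk,
            smul_eq_mul, Finset.mul_sum, LinearMap.smul_apply] } with hB
    -- injectivity of ε
    have hεinj : Function.Injective ε := by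
      rw [← LinearMap.ker_eq_bot, LinearMap.ker_eq_bot']
      intro f hf
      funext v
      refine trace_pairing_nondeg (f v) fun ψ => ?_
      have h1 : ε f (Pi.single v ψ) = 0 := by rw [hf]; rfl
      rw [show ε f (Pi.single v ψ) = ∑ v', trace k (W v')
        (f v' ∘ₗ Pi.single (M := fun v => W v →ₗ[k] W v) v ψ v') from rfl] at h1
      rwa [Finset.sum_eq_single v (fun v' _ hne => by
        rw [Pi.single_eq_of_ne hne, comp_zero, map_zero]) (by simp), Pi.single_eq_same] at h1
    -- injectivity of B
    have hBinj : Function.Injective B := by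
      rw [← LinearMap.ker_eq_bot, LinearMap.ker_eq_bot']
      intro g hg
      funext a
      refine trace_pairing_nondeg (g a) fun ψ => ?_
      have h1 : B g (Pi.single a ψ) = 0 := by rw [hg]; rfl
      rw [show B g (Pi.single a ψ) = ∑ a', trace k (W (hd a'))
        (g a' ∘ₗ Pi.single (M := fun a => W (hd a) →ₗ[k] W (tl a)) a ψ a') from rfl] at h1
      rwa [Finset.sum_eq_single a (fun a' _ hne => by
        rw [Pi.single_eq_of_ne hne, comp_zero, map_zero]) (by simp), Pi.single_eq_same] at h1
    -- the adjunction identity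
    have hadj : L.dualMap ∘ₗ ε = B ∘ₗ M := by
      refine LinearMap.ext fun f => LinearMap.ext fun ψ => ?_
      show ε f (L ψ) = ∑ a, trace k (W (hd a)) (M f a ∘ₗ ψ a)
      have lhs : ε f (L ψ) = ∑ v, trace k (W v) (f v ∘ₗ L ψ v) := rfl
      rw [lhs]
      have key : ∀ v, trace k (W v) (f v ∘ₗ L ψ v)
          = ∑ a, trace k (W v) (f v ∘ₗ Pi.single (M := fun v => W v →ₗ[k] W v) (hd a)
              ((φ a).comp (ψ a)) v)
            - ∑ a, trace k (W v) (f v ∘ₗ Pi.single (M := fun v => W v →ₗ[k] W v) (tl a)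
              ((ψ a).comp (φ a)) v) := by
        intro v
        have hsum : ∀ (x : A → (W v →ₗ[k] W v)),
            trace k (W v) (f v ∘ₗ ∑ c, x c) = ∑ c, trace k (W v) (f v ∘ₗ x c) := fun x =>
          map_sum ((trace k (W v)) ∘ₗ (LinearMap.llcomp k (W v) (W v) (W v) (f v))) x
            Finset.univ
        rw [hL ψ v]
        simp only [Finset.sum_apply]
        rw [comp_sub, map_sub, hsum, hsum]
      simp only [key]
      rw [Finset.sum_sub_distrib, Finset.sum_comm, Finset.sum_comm
        (s := Finset.univ (α := V))]
      have e1 : ∀ a, ∑ v, trace k (W v) (f v ∘ₗ Pi.single (M := fun v => W v →ₗ[k] W v) (hd a)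
          ((φ a).comp (ψ a)) v) = trace k (W (hd a)) (f (hd a) ∘ₗ (φ a ∘ₗ ψ a)) := by
        intro a
        rw [Finset.sum_eq_single (hd a) (fun v _ hne => by
          rw [Pi.single_eq_of_ne hne, comp_zero, map_zero]) (by simp), Pi.single_eq_same]
      have e2 : ∀ a, ∑ v, trace k (W v) (f v ∘ₗ Pi.single (M := fun v => W v →ₗ[k] W v) (tl a)
          ((ψ a).comp (φ a)) v) = trace k (W (tl a)) (f (tl a) ∘ₗ (ψ a ∘ₗ φ a)) := by
        intro a
        rw [Finset.sum_eq_single (tl a) (fun v _ hne => by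
          rw [Pi.single_eq_of_ne hne, comp_zero, map_zero]) (by simp), Pi.single_eq_same]
      simp only [e1, e2]
      rw [← Finset.sum_sub_distrib]
      refine Finset.sum_congr rfl fun a _ => ?_
      rw [hMapp, sub_comp, map_sub]
      congr 1
      exact trace_comp_comm' (φ a) (f (tl a) ∘ₗ ψ a)
    -- surjectivity of ε
    have hεsurj : Function.Surjective ε :=
      (LinearMap.injective_iff_surjective_of_finrank_eq_finrank
        (Subspace.dual_finrank_eq (K := k)).symm).mp hεinj
    -- ranks
    have hr1 : finrank k (LinearMap.range (L.dualMap ∘ₗ ε)) = finrank k (LinearMap.range L) := by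
      rw [LinearMap.range_comp_of_range_eq_top _ (LinearMap.range_eq_top.mpr hεsurj),
        LinearMap.finrank_range_dualMap_eq_finrank_range]
    have hr2 : finrank k (LinearMap.range (B ∘ₗ M)) = finrank k (LinearMap.range M) := by
      rw [LinearMap.range_comp]
      exact (LinearEquiv.finrank_eq
        ((LinearMap.range M).equivMapOfInjective B hBinj)).symm
    have hrank : finrank k (LinearMap.range L) = finrank k (LinearMap.range M) := by
      rw [← hr1, hadj, hr2]
    -- rank-nullity
    have hn1 : finrank k (LinearMap.range L) + finrank k (LinearMap.ker L)
        = ∑ a, finrank k (W (hd a)) * finrank k (W (tl a)) := by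
      rw [LinearMap.finrank_range_add_finrank_ker, Module.finrank_pi_fintype]
      exact Finset.sum_congr rfl fun a _ => Module.finrank_linearMap k k (W (hd a)) (W (tl a))
    have hn2 : finrank k (LinearMap.range M) + finrank k E
        = ∑ v, finrank k (W v) * finrank k (W v) := by
      rw [← hkerM, LinearMap.finrank_range_add_finrank_ker, Module.finrank_pi_fintype]
      exact Finset.sum_congr rfl fun v _ => Module.finrank_linearMap k k (W v) (W v)
    have hn1' : (finrank k (LinearMap.range L) : ℤ) + finrank k (LinearMap.ker L)
        = ∑ a, (finrank k (W (tl a)) : ℤ) * (finrank k (W (hd a)) : ℤ) := by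
      exact_mod_cast hn1.trans (Finset.sum_congr rfl fun a _ => mul_comm _ _)
    have hn2' : (finrank k (LinearMap.range M) : ℤ) + finrank k E
        = ∑ v, (finrank k (W v) : ℤ) * (finrank k (W v) : ℤ) := by
      exact_mod_cast hn2
    have hrank' : (finrank k (LinearMap.range L) : ℤ) = finrank k (LinearMap.range M) := by
      exact_mod_cast hrank
    linarith [hn1', hn2', hrank']
end

section
/- Let k be a field with algebraic closure k̄, Q a quiver, θ ∈ ℤ^V, and W a finite-dimensional k-representation of Q such that W ⊗_k k̄ is θ-stable (i.e., W is θ-geometrically stable). Then End_Q(W) = k · id_W; in particular, the stabiliser of W under the conjugation action of GL_d(k) = ∏_{v∈V} GL_{d_v}(k) on d-dimensional representations is the diagonal subgroup Δ = {(t · I_{d_v})_{v∈V} : t ∈ k^×}. -/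
open scoped TensorProduct

lemma aux_tmul_one_inj (k : Type) [Field k] (M : Type) [AddCommGroup M] [Module k M]
    {y z : M} (h : (1 : AlgebraicClosure k) ⊗ₜ[k] y = (1 : AlgebraicClosure k) ⊗ₜ[k] z) :
    y = z := by
  let b := Module.Free.chooseBasis k M
  apply b.repr.injective
  ext i
  have h2 := congrArg (fun t => (b.baseChange (AlgebraicClosure k)).repr t i) h
  simp only [Module.Basis.baseChange_repr_tmul] at h2
  have h3 : algebraMap k (AlgebraicClosure k) (b.repr y i)
      = algebraMap k (AlgebraicClosure k) (b.repr z i) := by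
    simpa [Algebra.algebraMap_eq_smul_one] using h2
  exact (algebraMap k (AlgebraicClosure k)).injective h3

/-- Let `W` be a `θ`-geometrically stable finite-dimensional
`k`-representation of a quiver `Q`, i.e. the base change of `W` to the algebraic closure
`k̄` is `θ`-stable. Then `End_Q(W) = k · id`; in particular the stabiliser of `W` under
the conjugation action of `GL_d(k)` (equivalently, the automorphism group `Aut_Q(W)`) is
the diagonal subgroup `Δ = {t · id : t ∈ kˣ}`. -/
theorem stmt_18 (k : Type) [Field k] (V A : Type) [Fintype V] [Fintype A]
    (hd tl : A → V) (θ : V → ℤ)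
    (W : V → Type)
    [∀ v, AddCommGroup (W v)] [∀ v, Module k (W v)] [∀ v, FiniteDimensional k (W v)]
    (φ : ∀ a, W (tl a) →ₗ[k] W (hd a))
    -- θ · dim W = 0
    (hθdim : ∑ v, θ v * (Module.finrank k (W v) : ℤ) = 0)
    -- W ⊗_k k̄ is θ-stable
    (hgs : ∀ U : ∀ v, Submodule (AlgebraicClosure k) (AlgebraicClosure k ⊗[k] W v),
      (∀ a, ∀ x ∈ U (tl a), (φ a).baseChange (AlgebraicClosure k) x ∈ U (hd a)) →
      (¬ ∀ v, U v = ⊥) → (¬ ∀ v, U v = ⊤) →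
      0 < ∑ v, θ v * (Module.finrank (AlgebraicClosure k) (U v) : ℤ)) :
    -- End_Q(W) = k · id:
    (∀ f : ∀ v, W v →ₗ[k] W v,
      (∀ a, (f (hd a)).comp (φ a) = (φ a).comp (f (tl a))) →
      ∃ c : k, ∀ v, f v = c • (LinearMap.id : W v →ₗ[k] W v)) ∧
    -- the stabiliser of W, i.e. Aut_Q(W), is the diagonal Δ = kˣ · id:
    (∀ g : ∀ v, W v ≃ₗ[k] W v,
      (∀ a x, g (hd a) (φ a x) = φ a (g (tl a) x)) →
      ∃ c : kˣ, ∀ v x, g v x = (c : k) • x) := by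
  set K := AlgebraicClosure k with hK
  have key : ∀ f : ∀ v, W v →ₗ[k] W v,
      (∀ a, (f (hd a)).comp (φ a) = (φ a).comp (f (tl a))) →
      ∃ c : k, ∀ v, f v = c • (LinearMap.id : W v →ₗ[k] W v) := by
    intro f hf
    by_cases hW : ∀ v, Subsingleton (W v)
    · refine ⟨0, fun v => ?_⟩
      have := hW v
      ext x
      exact Subsingleton.elim _ _
    · push_neg at hW
      obtain ⟨v₀, hv₀⟩ := hW
      -- base change of f
      set F : ∀ v, (K ⊗[k] W v) →ₗ[K] (K ⊗[k] W v) := fun v => (f v).baseChange K with hF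
      haveI : Nontrivial (K ⊗[k] W v₀) := by
        obtain ⟨x₀, hx₀⟩ := exists_ne (0 : W v₀)
        refine ⟨(1 : K) ⊗ₜ[k] x₀, 0, fun h => hx₀ ?_⟩
        have : (1 : K) ⊗ₜ[k] x₀ = (1 : K) ⊗ₜ[k] (0 : W v₀) := by simpa using h
        exact aux_tmul_one_inj k _ this
      obtain ⟨μ, hμ⟩ := Module.End.exists_eigenvalue (F v₀ : Module.End K (K ⊗[k] W v₀))
      obtain ⟨x, hx⟩ := hμ.exists_hasEigenvector
      -- the shifted endomorphism
      set G : ∀ v, (K ⊗[k] W v) →ₗ[K] (K ⊗[k] W v) :=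
        fun v => F v - μ • LinearMap.id with hG
      -- commutation after base change
      have hcomm : ∀ a (y : K ⊗[k] W (tl a)),
          G (hd a) ((φ a).baseChange K y) = (φ a).baseChange K (G (tl a) y) := by
        intro a y
        have h1 : (F (hd a)).comp ((φ a).baseChange K)
            = ((φ a).baseChange K).comp (F (tl a)) := by
          rw [hF]
          rw [← LinearMap.baseChange_comp, ← LinearMap.baseChange_comp, hf a]
        simp only [hG, LinearMap.sub_apply, LinearMap.smul_apply, LinearMap.id_apply, map_sub,
          map_smul]
        rw [show (F (hd a)) ((φ a).baseChange K y) = (φ a).baseChange K ((F (tl a)) y) from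
          congrFun (congrArg DFunLike.coe h1) y]
      -- the eigenspace subrepresentation
      set U : ∀ v, Submodule K (K ⊗[k] W v) := fun v => LinearMap.ker (G v) with hU
      have hUsub : ∀ a, ∀ y ∈ U (tl a), (φ a).baseChange K y ∈ U (hd a) := by
        intro a y hy
        simp only [hU, LinearMap.mem_ker] at hy ⊢
        rw [hcomm a y, hy, map_zero]
      have hUnbot : ¬ ∀ v, U v = ⊥ := by
        intro h
        have hx0 : x ∈ U v₀ := by
          simp only [hU, hG, LinearMap.mem_ker, LinearMap.sub_apply, LinearMap.smul_apply,
            LinearMap.id_apply, sub_eq_zero]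
          exact hx.apply_eq_smul
        rw [h v₀] at hx0
        exact hx.2 (by simpa using hx0)
      have htop : ∀ v, U v = ⊤ := by
        by_contra hntop
        set U' : ∀ v, Submodule K (K ⊗[k] W v) := fun v => LinearMap.range (G v) with hU'
        have hU'sub : ∀ a, ∀ y ∈ U' (tl a), (φ a).baseChange K y ∈ U' (hd a) := by
          intro a y hy
          obtain ⟨z, rfl⟩ := hy
          exact ⟨(φ a).baseChange K z, hcomm a z⟩
        have hrn : ∀ v, Module.finrank K (U' v) + Module.finrank K (U v)
            = Module.finrank k (W v) := by
          intro v
          have h1 : Module.finrank K (K ⊗[k] W v) = Module.finrank k (W v) :=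
            Module.finrank_baseChange
          rw [← h1]
          exact LinearMap.finrank_range_add_finrank_ker (G v)
        have hU'nbot : ¬ ∀ v, U' v = ⊥ := by
          intro h
          apply hntop
          intro v
          have : G v = 0 := LinearMap.range_eq_bot.mp (h v)
          simp [hU, this]
        have hU'ntop : ¬ ∀ v, U' v = ⊤ := by
          intro h
          apply hUnbot
          intro v
          have h2 := hrn v
          rw [h v, finrank_top] at h2
          have h3 : Module.finrank K (K ⊗[k] W v) = Module.finrank k (W v) :=
            Module.finrank_baseChange
          have h4 : Module.finrank K (U v) = 0 := by omega
          exact Submodule.finrank_eq_zero.mp h4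
        have h1 := hgs U hUsub hUnbot hntop
        have h2 := hgs U' hU'sub hU'nbot hU'ntop
        have hsum : ∑ v, θ v * (Module.finrank K (U v) : ℤ)
            + ∑ v, θ v * (Module.finrank K (U' v) : ℤ) = 0 := by
          rw [← Finset.sum_add_distrib]
          rw [← hθdim]
          refine Finset.sum_congr rfl fun v _ => ?_
          have h3 := hrn v
          have h4 : (Module.finrank K (U' v) : ℤ) + Module.finrank K (U v)
              = Module.finrank k (W v) := by exact_mod_cast h3
          linear_combination θ v * h4
        linarith
      -- so F v = μ • id everywhere
      have hFeq : ∀ v (y : K ⊗[k] W v), F v y = μ • y := by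
        intro v y
        have : y ∈ U v := by rw [htop v]; trivial
        simp only [hU, hG, LinearMap.mem_ker, LinearMap.sub_apply, LinearMap.smul_apply,
          LinearMap.id_apply, sub_eq_zero] at this
        exact this
      -- μ comes from k
      obtain ⟨x₀, hx₀⟩ := exists_ne (0 : W v₀)
      let b := Module.Free.chooseBasis k (W v₀)
      have hrepr : b.repr x₀ ≠ 0 := fun h => hx₀ (by
        have := congrArg b.repr.symm h
        simpa using this)
      obtain ⟨i, hi⟩ := Finsupp.ne_iff.mp hrepr
      simp only [Finsupp.coe_zero, Pi.zero_apply] at hi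
      have heig : (1 : K) ⊗ₜ[k] (f v₀ x₀) = μ ⊗ₜ[k] x₀ := by
        have := hFeq v₀ ((1 : K) ⊗ₜ[k] x₀)
        rw [hF] at this
        simpa [LinearMap.baseChange_tmul, TensorProduct.smul_tmul'] using this
      have hco := congrArg (fun t => (b.baseChange K).repr t i) heig
      simp only [Module.Basis.baseChange_repr_tmul] at hco
      -- hco : b.repr (f v₀ x₀) i • 1 = b.repr x₀ i • μ
      set c : k := (b.repr x₀ i)⁻¹ * b.repr (f v₀ x₀) i with hc
      have hμc : μ = algebraMap k K c := by
        have h1 : algebraMap k K (b.repr (f v₀ x₀) i) = algebraMap k K (b.repr x₀ i) * μ := by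
          rw [Algebra.algebraMap_eq_smul_one]
          rw [hco]
          rw [Algebra.smul_def]
        have hbne : algebraMap k K (b.repr x₀ i) ≠ 0 := fun h0 =>
          hi (by simpa using (algebraMap k K).injective (h0.trans (map_zero _).symm))
        rw [hc, map_mul, map_inv₀, eq_inv_mul_iff_mul_eq₀ hbne, mul_comm]
        rw [mul_comm]
        exact h1.symm
      refine ⟨c, fun v => ?_⟩
      ext y
      have := hFeq v ((1 : K) ⊗ₜ[k] y)
      rw [hF, hμc] at this
      simp only [LinearMap.baseChange_tmul] at this
      rw [algebraMap_smul, ← TensorProduct.tmul_smul] at this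
      have := aux_tmul_one_inj k (W v) this
      simpa using this
  refine ⟨key, fun g hg => ?_⟩
  obtain ⟨c, hcf⟩ := key (fun v => (g v).toLinearMap) (by
    intro a; ext y; exact hg a y)
  by_cases hW : ∀ v, Subsingleton (W v)
  · refine ⟨1, fun v x => ?_⟩
    have := hW v
    exact Subsingleton.elim _ _
  · push_neg at hW
    obtain ⟨v₀, hv₀⟩ := hW
    obtain ⟨x₀, hx₀⟩ := exists_ne (0 : W v₀)
    have hgc : ∀ v (x : W v), g v x = c • x := by
      intro v x
      have := congrFun (congrArg DFunLike.coe (hcf v)) x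
      simpa using this
    have hc0 : c ≠ 0 := by
      intro h
      apply hx₀
      have : g v₀ x₀ = 0 := by rw [hgc v₀ x₀, h, zero_smul]
      have h2 : g v₀ x₀ = g v₀ 0 := by simpa using this
      exact (g v₀).injective h2
    exact ⟨Units.mk0 c hc0, fun v x => by simpa using hgc v x⟩
end
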